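/- arXiv:0902.2150 — 2 statements merged into one kernel-verified Lean document; each statement's English description precedes it below -/
import Mathlib

section
/- Let H be a connected graph with girth at least 7 whose square G = H² is not complete. An edge xy of G is contained in at least two distinct maximal cliques of G if and only if xy is an edge of H with both endpoints having degree at least 2 in H. -/
open SimpleGraph

variable {V : Type*}

/-- The square of a graph: `x` and `y` are adjacent iff `1 ≤ d_H(x,y) ≤ 2`. -/
def graphSq (H : SimpleGraph V) : SimpleGraph V where
  Adj x y := x ≠ y ∧ (H.Adj x y ∨ ∃ z, H.Adj x z ∧ H.Adj z y)
  symm := by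
    refine ⟨?_⟩
    rintro x y ⟨hxy, h | ⟨z, h1, h2⟩⟩
    · exact ⟨hxy.symm, Or.inl h.symm⟩
    · exact ⟨hxy.symm, Or.inr ⟨z, h2.symm, h1.symm⟩⟩
  loopless := ⟨fun x h => h.1 rfl⟩

/-- `Q` is a maximal clique of `G`. -/
def IsMaxClique (G : SimpleGraph V) (Q : Set V) : Prop :=
  G.IsClique Q ∧ ∀ R : Set V, G.IsClique R → Q ⊆ R → R = Q

/-- `xy` is a forced edge of `G`: it lies in at least two distinct maximal cliques. -/
def Forced (G : SimpleGraph V) (x y : V) : Prop :=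
  G.Adj x y ∧ ∃ Q₁ Q₂ : Set V, Q₁ ≠ Q₂ ∧ IsMaxClique G Q₁ ∧ IsMaxClique G Q₂ ∧
    x ∈ Q₁ ∧ y ∈ Q₁ ∧ x ∈ Q₂ ∧ y ∈ Q₂

/-- The subgraph of `G` consisting of all forced edges. -/
def forcedSubgraph (G : SimpleGraph V) : SimpleGraph V where
  Adj := Forced G
  symm := by
    refine ⟨?_⟩
    rintro x y ⟨hadj, Q₁, Q₂, hne, h1, h2, hx1, hy1, hx2, hy2⟩
    exact ⟨hadj.symm, Q₁, Q₂, hne, h1, h2, hy1, hx1, hy2, hx2⟩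
  loopless := ⟨fun x h => h.1.ne rfl⟩

/-- `H` contains no cycle of length 3 and no cycle of length 5. -/
def C3C5Free (H : SimpleGraph V) : Prop :=
  ∀ (v : V) (w : H.Walk v v), w.IsCycle → w.length ≠ 3 ∧ w.length ≠ 5

/-- The set `S` induces a star in `F`: at least two vertices, a center adjacent to
all others, and the non-center vertices pairwise non-adjacent. -/
def IsStarOn (F : SimpleGraph V) (S : Set V) : Prop :=
  S.Nontrivial ∧ ∃ c ∈ S, (∀ x ∈ S, x ≠ c → F.Adj c x) ∧
    ∀ x ∈ S, ∀ y ∈ S, x ≠ c → y ≠ c → x ≠ y → ¬ F.Adj x y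

section Aux
variable {H : SimpleGraph V}

lemma cycLen (hgirth : 7 ≤ H.girth) {a : V} (w : H.Walk a a) (hw : w.IsCycle) : 7 ≤ w.length := by
  have h1 : H.egirth ≤ w.length := iInf_le_of_le a (iInf_le_of_le w (iInf_le _ hw))
  have := ENat.toNat_le_toNat h1 (by simp)
  simpa [girth] using hgirth.trans this

lemma noC3 (hgirth : 7 ≤ H.girth) {a b c : V} (h1 : H.Adj a b) (h2 : H.Adj b c) (h3 : H.Adj c a) : False := by
  have hw : (Walk.cons h1 (Walk.cons h2 (Walk.cons h3 Walk.nil))).IsCycle := by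
    simp [Walk.isCycle_def, Walk.isTrail_def, h1.ne, h2.ne, h3.ne, h1.ne', h2.ne', h3.ne', Sym2.eq_iff]
  have := cycLen hgirth _ hw
  simp at this

lemma noC4 (hgirth : 7 ≤ H.girth) {a b c d : V} (h1 : H.Adj a b) (h2 : H.Adj b c) (h3 : H.Adj c d) (h4 : H.Adj d a)
    (hac : a ≠ c) (hbd : b ≠ d) : False := by
  have hw : (Walk.cons h1 (Walk.cons h2 (Walk.cons h3 (Walk.cons h4 Walk.nil)))).IsCycle := by
    simp [Walk.isCycle_def, Walk.isTrail_def, h1.ne, h2.ne, h3.ne, h4.ne, h1.ne', h2.ne', h3.ne', h4.ne',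
      hac, hbd, hac.symm, hbd.symm, Sym2.eq_iff]
  have := cycLen hgirth _ hw
  simp at this

lemma noC5 (hgirth : 7 ≤ H.girth) {a b c d e : V} (h1 : H.Adj a b) (h2 : H.Adj b c) (h3 : H.Adj c d)
    (h4 : H.Adj d e) (h5 : H.Adj e a)
    (hac : a ≠ c) (had : a ≠ d) (hbd : b ≠ d) (hbe : b ≠ e) (hce : c ≠ e) : False := by
  have hw : (Walk.cons h1 (Walk.cons h2 (Walk.cons h3 (Walk.cons h4 (Walk.cons h5 Walk.nil))))).IsCycle := by
    simp [Walk.isCycle_def, Walk.isTrail_def, h1.ne, h2.ne, h3.ne, h4.ne, h5.ne,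
      h1.ne', h2.ne', h3.ne', h4.ne', h5.ne',
      hac, had, hbd, hbe, hce, hac.symm, had.symm, hbd.symm, hbe.symm, hce.symm, Sym2.eq_iff]
  have := cycLen hgirth _ hw
  simp at this

lemma noC6 (hgirth : 7 ≤ H.girth) {a b c d e f : V} (h1 : H.Adj a b) (h2 : H.Adj b c) (h3 : H.Adj c d)
    (h4 : H.Adj d e) (h5 : H.Adj e f) (h6 : H.Adj f a)
    (hac : a ≠ c) (had : a ≠ d) (hae : a ≠ e) (hbd : b ≠ d) (hbe : b ≠ e) (hbf : b ≠ f)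
    (hce : c ≠ e) (hcf : c ≠ f) (hdf : d ≠ f) : False := by
  have hw : (Walk.cons h1 (Walk.cons h2 (Walk.cons h3 (Walk.cons h4 (Walk.cons h5 (Walk.cons h6 Walk.nil)))))).IsCycle := by
    simp [Walk.isCycle_def, Walk.isTrail_def, h1.ne, h2.ne, h3.ne, h4.ne, h5.ne, h6.ne,
      h1.ne', h2.ne', h3.ne', h4.ne', h5.ne', h6.ne',
      hac, had, hae, hbd, hbe, hbf, hce, hcf, hdf,
      hac.symm, had.symm, hae.symm, hbd.symm, hbe.symm, hbf.symm, hce.symm, hcf.symm, hdf.symm, Sym2.eq_iff]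
  have := cycLen hgirth _ hw
  simp at this

/-- closed neighborhood -/
def nbhd (H : SimpleGraph V) (u : V) : Set V := {w | w = u ∨ H.Adj u w}

lemma nbhd_clique (u : V) : (graphSq H).IsClique (nbhd H u) := by
  rintro s (rfl | hs) t (rfl | ht) hst
  · exact absurd rfl hst
  · exact ⟨hst, Or.inl ht⟩
  · exact ⟨hst, Or.inl hs.symm⟩
  · exact ⟨hst, Or.inr ⟨u, hs.symm, ht⟩⟩

lemma adj_of_sq {p q : V} (h : (graphSq H).Adj p q) :
    p ≠ q ∧ (H.Adj p q ∨ ∃ z, H.Adj p z ∧ H.Adj z q) := h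

lemma cliqueSub (hgirth : 7 ≤ H.girth) {S : Set V} (hS : (graphSq H).IsClique S) {a : V} (ha : a ∈ S) :
    ∃ u, ∀ s ∈ S, s = u ∨ H.Adj u s := by
  by_cases hpair : ∃ p ∈ S, ∃ q ∈ S, H.Adj p q
  · obtain ⟨p, hp, q, hq, hpq⟩ := hpair
    have claim1 : ∀ c ∈ S, (c = p ∨ H.Adj p c) ∨ (c = q ∨ H.Adj q c) := by
      intro c hc
      by_cases hcp : c = p
      · exact Or.inl (Or.inl hcp)
      by_cases hcq : c = q
      · exact Or.inr (Or.inl hcq)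
      obtain ⟨-, h | ⟨z, hz1, hz2⟩⟩ := adj_of_sq (hS hp hc (fun h => hcp h.symm))
      · exact Or.inl (Or.inr h)
      obtain ⟨-, h | ⟨w, hw1, hw2⟩⟩ := adj_of_sq (hS hq hc (fun h => hcq h.symm))
      · exact Or.inr (Or.inr h)
      by_cases hzq : z = q
      · exact Or.inr (Or.inr (hzq ▸ hz2))
      by_cases hwp : w = p
      · exact Or.inl (Or.inr (hwp ▸ hw2))
      by_cases hzw : z = w
      · exact absurd (hzw ▸ hz1) (fun h => noC3 hgirth hpq hw1 ((hzw ▸ hz1).symm))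
      · exact (noC5 hgirth hz1 hz2 hw2.symm hw1.symm hpq.symm (fun h => hcp h.symm)
          (fun h => hwp h.symm) hzw hzq hcq).elim
    by_cases hallp : ∀ c ∈ S, c = p ∨ H.Adj p c
    · exact ⟨p, hallp⟩
    by_cases hallq : ∀ c ∈ S, c = q ∨ H.Adj q c
    · exact ⟨q, hallq⟩
    exfalso
    push_neg at hallp hallq
    obtain ⟨c, hcS, hcp, hcpa⟩ := hallp
    obtain ⟨d, hdS, hdq, hdqa⟩ := hallq
    have hcq2 : H.Adj q c := by
      rcases claim1 c hcS with (h | h) | (h | h)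
      · exact absurd h hcp
      · exact absurd h hcpa
      · exact absurd (h ▸ hpq) (h ▸ hcpa)
      · exact h
    have hdp2 : H.Adj p d := by
      rcases claim1 d hdS with (h | h) | (h | h)
      · exact absurd (h ▸ hpq.symm) (h ▸ hdqa)
      · exact h
      · exact absurd h hdq
      · exact absurd h hdqa
    have hcd : c ≠ d := fun h => hcpa (h ▸ hdp2)
    obtain ⟨-, h | ⟨z, hz1, hz2⟩⟩ := adj_of_sq (hS hcS hdS hcd)
    · exact noC4 hgirth hpq hcq2 h hdp2.symm (fun h => hcp h.symm) (fun h => hdq h.symm)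
    · by_cases hzp : z = p
      · exact hcpa (hzp ▸ hz1).symm
      by_cases hzq2 : z = q
      · exact hdqa (hzq2 ▸ hz2)
      exact noC5 hgirth hpq hcq2 hz1 hz2 hdp2.symm (fun h => hcp h.symm)
        (fun h => hzp h.symm) (fun h => hzq2 h.symm) (fun h => hdq h.symm) hcd
  · push_neg at hpair
    by_cases hsing : ∀ s ∈ S, s = a
    · exact ⟨a, fun s hs => Or.inl (hsing s hs)⟩
    push_neg at hsing
    obtain ⟨b, hb, hba⟩ := hsing
    obtain ⟨-, h | ⟨z, hz1, hz2⟩⟩ := adj_of_sq (hS ha hb (fun h => hba h.symm))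
    · exact (hpair a ha b hb h).elim
    refine ⟨z, fun c hc => Or.inr ?_⟩
    by_cases hca : c = a
    · exact hca ▸ hz1.symm
    by_cases hcb : c = b
    · exact hcb ▸ hz2
    obtain ⟨-, h | ⟨w, hw1, hw2⟩⟩ := adj_of_sq (hS ha hc (fun h => hca h.symm))
    · exact (hpair a ha c hc h).elim
    obtain ⟨-, h | ⟨w', hw1', hw2'⟩⟩ := adj_of_sq (hS hb hc (fun h => hcb h.symm))
    · exact (hpair b hb c hc h).elim
    by_cases hwz : w = z
    · exact hwz ▸ hw2
    by_cases hwz' : w' = z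
    · exact hwz' ▸ hw2'
    by_cases hww : w = w'
    · exact (noC4 hgirth hz1 hz2 (hww ▸ hw1') hw1.symm (fun h => hba h.symm)
        (fun h => hwz h.symm)).elim
    · exact (noC6 hgirth hz1 hz2 hw1' hw2' hw2.symm hw1.symm
        (fun h => hba h.symm)
        (fun h => hpair b hb a ha (h ▸ hw1'))
        (fun h => hca h.symm)
        (fun h => hwz' h.symm)
        (fun h => hpair a ha c hc (h ▸ hz1))
        (fun h => hwz h.symm)
        (fun h => hcb h.symm)
        (fun h => hpair b hb a ha (h ▸ hw1).symm)
        (fun h => hww h.symm)).elim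

lemma two_le_deg [Fintype V] [DecidableRel H.Adj] {u a b : V} (ha : H.Adj u a) (hb : H.Adj u b)
    (hab : a ≠ b) : 2 ≤ H.degree u := by
  have h1 : 1 < (H.neighborFinset u).card :=
    Finset.one_lt_card.mpr ⟨a, by simpa [SimpleGraph.mem_neighborFinset], b,
      by simpa [SimpleGraph.mem_neighborFinset], hab⟩
  rw [SimpleGraph.card_neighborFinset_eq_degree] at h1
  omega

lemma deg_two_exists [Fintype V] [DecidableRel H.Adj] {u : V} (h : 2 ≤ H.degree u) :
    ∃ a b, H.Adj u a ∧ H.Adj u b ∧ a ≠ b := by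
  have h1 : 1 < (H.neighborFinset u).card := by
    rw [SimpleGraph.card_neighborFinset_eq_degree]; omega
  obtain ⟨a, haS, b, hbS, hab⟩ := Finset.one_lt_card.mp h1
  rw [SimpleGraph.mem_neighborFinset] at haS hbS
  exact ⟨a, b, haS, hbS, hab⟩

lemma nbhd_max [Fintype V] [DecidableRel H.Adj] (hgirth : 7 ≤ H.girth) {u : V}
    (hdeg : 2 ≤ H.degree u) : IsMaxClique (graphSq H) (nbhd H u) := by
  refine ⟨nbhd_clique u, fun R hR hsub => ?_⟩
  have huR : u ∈ R := hsub (Or.inl rfl)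
  obtain ⟨w, hw⟩ := cliqueSub hgirth hR huR
  have hwu : w = u := by
    rcases hw u huR with rfl | hadj
    · rfl
    obtain ⟨a, b, ha, hb, hab⟩ := deg_two_exists hdeg
    have ha' : a = w := by
      rcases hw a (hsub (Or.inr ha)) with h | h
      · exact h
      · exact (noC3 hgirth hadj ha h.symm).elim
    have hb' : b = w := by
      rcases hw b (hsub (Or.inr hb)) with h | h
      · exact h
      · exact (noC3 hgirth hadj hb h.symm).elim
    exact absurd (ha'.trans hb'.symm) hab
  exact Set.Subset.antisymm (fun s hs => hwu ▸ hw s hs) hsub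

lemma max_eq_nbhd [Fintype V] [DecidableRel H.Adj] (hconn : H.Connected) (hgirth : 7 ≤ H.girth)
    (hnc : graphSq H ≠ ⊤) {Q : Set V} (hQ : IsMaxClique (graphSq H) Q) {x y : V}
    (hx : x ∈ Q) (hy : y ∈ Q) (hxy : x ≠ y) :
    ∃ u, Q = nbhd H u ∧ 2 ≤ H.degree u := by
  obtain ⟨u, hsub⟩ := cliqueSub hgirth hQ.1 hx
  have hQu : Q = nbhd H u := (hQ.2 (nbhd H u) (nbhd_clique u) hsub).symm
  refine ⟨u, hQu, ?_⟩
  by_contra hdeg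
  push_neg at hdeg
  -- u has at least one neighbor
  have hvne : ∃ v', v' ≠ u := by
    by_cases h : x = u
    · exact ⟨y, fun hh => hxy (h ▸ hh).symm⟩
    · exact ⟨x, h⟩
  obtain ⟨v', hv'⟩ := hvne
  have hnbr : ∃ v, H.Adj u v := by
    obtain ⟨p⟩ := hconn.preconnected u v'
    cases p with
    | nil => exact absurd rfl hv'.symm
    | cons h q => exact ⟨_, h⟩
  obtain ⟨v, huv⟩ := hnbr
  have huniq : ∀ w, H.Adj u w → w = v := by
    intro w hw
    have hcard : (H.neighborFinset u).card ≤ 1 := by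
      rw [SimpleGraph.card_neighborFinset_eq_degree]; omega
    exact Finset.card_le_one.mp hcard w (by simpa [mem_neighborFinset]) v (by simpa [mem_neighborFinset])
  -- N[v] is a clique containing Q, so N[v] = Q = N[u]
  have hsubv : Q ⊆ nbhd H v := by
    intro s hs
    rcases hsub s hs with rfl | h
    · exact Or.inr huv.symm
    · exact Or.inl (huniq s h)
  have hQv : nbhd H v = Q := hQ.2 (nbhd H v) (nbhd_clique v) hsubv
  have huniqv : ∀ w, H.Adj v w → w = u := by
    intro w hw
    have : w ∈ nbhd H u := hQu ▸ hQv ▸ (Or.inr hw : w ∈ nbhd H v)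
    rcases this with rfl | h
    · rfl
    · exact absurd (huniq w h) hw.ne'
  -- V = {u, v}
  have aux : ∀ (w₁ w₂ : V) (p : H.Walk w₁ w₂), (w₂ = u ∨ w₂ = v) → (w₁ = u ∨ w₁ = v) := by
    intro w₁ w₂ p
    induction p with
    | nil => exact id
    | cons h q ih =>
      intro h2
      rcases ih h2 with rfl | rfl
      · exact Or.inr (huniq _ h.symm)
      · exact Or.inl (huniqv _ h.symm)
  have hall : ∀ w, w = u ∨ w = v := fun w =>
    (hconn.preconnected w u).elim (fun p => aux w u p (Or.inl rfl))
  apply hnc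
  ext a b
  simp only [top_adj]
  constructor
  · exact fun h => h.1
  · intro hab
    refine ⟨hab, Or.inl ?_⟩
    rcases hall a with rfl | rfl <;> rcases hall b with rfl | rfl
    · exact absurd rfl hab
    · exact huv
    · exact huv.symm
    · exact absurd rfl hab

end Aux

theorem stmt2 [Fintype V] (H : SimpleGraph V) [DecidableRel H.Adj]
    (hconn : H.Connected) (hgirth : 7 ≤ H.girth) (hnc : graphSq H ≠ ⊤)
    (x y : V) (hxy : (graphSq H).Adj x y) :
    (∃ Q₁ Q₂ : Set V, Q₁ ≠ Q₂ ∧ IsMaxClique (graphSq H) Q₁ ∧ IsMaxClique (graphSq H) Q₂ ∧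
        x ∈ Q₁ ∧ y ∈ Q₁ ∧ x ∈ Q₂ ∧ y ∈ Q₂) ↔
      (H.Adj x y ∧ 2 ≤ H.degree x ∧ 2 ≤ H.degree y) := by
  have hxyne : x ≠ y := (adj_of_sq hxy).1
  constructor
  · rintro ⟨Q₁, Q₂, hne, h1, h2, hx1, hy1, hx2, hy2⟩
    obtain ⟨u, hQ1, hdu⟩ := max_eq_nbhd hconn hgirth hnc h1 hx1 hy1 hxyne
    obtain ⟨v, hQ2, hdv⟩ := max_eq_nbhd hconn hgirth hnc h2 hx2 hy2 hxyne
    have huv : u ≠ v := by rintro rfl; exact hne (hQ1.trans hQ2.symm)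
    rw [hQ1] at hx1 hy1
    rw [hQ2] at hx2 hy2
    -- hx1 : x = u ∨ H.Adj u x, etc.
    rcases hx1 with rfl | hxu
    · -- x = u
      rcases hy1 with rfl | hyu
      · exact absurd rfl hxyne
      rcases hy2 with rfl | hyv
      · -- y = v
        rcases hx2 with rfl | hxv
        · exact absurd rfl huv
        exact ⟨hyu, hdu, hdv⟩
      · rcases hx2 with rfl | hxv
        · exact absurd rfl huv
        exact ⟨hyu, hdu, two_le_deg hyu.symm hyv.symm hxv.ne'⟩
    · rcases hx2 with rfl | hxv
      · -- x = v
        rcases hy2 with rfl | hyv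
        · exact absurd rfl hxyne
        rcases hy1 with rfl | hyu
        · exact ⟨hyv, hdv, hdu⟩
        · exact ⟨hyv, hdv, two_le_deg hyv.symm hyu.symm (fun h => huv h.symm)⟩
      · -- x ≠ u, v ; x ~ u, x ~ v
        rcases hy1 with rfl | hyu
        · exact ⟨hxu.symm, two_le_deg hxu.symm hxv.symm huv, hdu⟩
        rcases hy2 with rfl | hyv
        · exact ⟨hxv.symm, two_le_deg hxu.symm hxv.symm huv, hdv⟩
        · exact (noC4 hgirth hxu hxv.symm hyv hyu.symm huv hxyne).elim
  · rintro ⟨hadj, hdx, hdy⟩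
    refine ⟨nbhd H x, nbhd H y, ?_, nbhd_max hgirth hdx, nbhd_max hgirth hdy,
      Or.inl rfl, Or.inr hadj, Or.inr hadj.symm, Or.inl rfl⟩
    intro h
    have key : ∀ c, H.Adj x c → c ≠ y → False := by
      intro c hc hcy
      have : c ∈ nbhd H y := h ▸ (Or.inr hc : c ∈ nbhd H x)
      rcases this with rfl | hyc
      · exact hcy rfl
      · exact noC3 hgirth hadj hyc hc.symm
    obtain ⟨a, b, ha, hb, hab⟩ := deg_two_exists hdx
    by_cases hay : a = y
    · exact key b hb (fun h2 => hab (hay.trans h2.symm))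
    · exact key a ha hay
end

section
/- Let G be a connected graph, v a vertex of G, and U ⊆ N_G(v). If H₁ and H₂ are both {C₃,C₅}-free graphs with H₁² = G = H₂² and N_{H₁}(v) = U = N_{H₂}(v), then H₁ = H₂. -/
open SimpleGraph

variable {V : Type*}

private lemma no_c3 {H : SimpleGraph V} (h : C3C5Free H) {a b c : V}
    (hab : H.Adj a b) (hbc : H.Adj b c) (hca : H.Adj c a) : False := by
  have hac : a ≠ c := hca.ne'
  refine (h a (Walk.cons hab (Walk.cons hbc (Walk.cons hca Walk.nil))) ?_).1 rfl
  refine ⟨⟨?_, by simp⟩, ?_⟩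
  · simp [Walk.isTrail_def, hab.ne, hbc.ne, hac, Sym2.eq, Sym2.rel_iff',
      hab.ne', hbc.ne', hac.symm]
  · simp [hab.ne', hbc.ne', hbc.ne, hac, hac.symm]

private lemma no_c5 {H : SimpleGraph V} (h : C3C5Free H) {a b c d e : V}
    (hab : H.Adj a b) (hbc : H.Adj b c) (hcd : H.Adj c d) (hde : H.Adj d e)
    (hea : H.Adj e a) (hac : a ≠ c) (had : a ≠ d) (hbd : b ≠ d) (hbe : b ≠ e)
    (hce : c ≠ e) : False := by
  refine (h a (Walk.cons hab (Walk.cons hbc (Walk.cons hcd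
    (Walk.cons hde (Walk.cons hea Walk.nil))))) ?_).2 rfl
  refine ⟨⟨?_, by simp⟩, ?_⟩
  · simp [Walk.isTrail_def, hab.ne, hbc.ne, hcd.ne, hde.ne, hea.ne', hac, had, hbd, hbe, hce,
      Sym2.eq, Sym2.rel_iff', hab.ne', hbc.ne', hcd.ne', hde.ne', hea.ne,
      hac.symm, had.symm, hbd.symm, hbe.symm, hce.symm]
  · simp [hab.ne', hbc.ne, hcd.ne, hde.ne, hea.ne, hac, had, hbd, hbe, hce,
      hbc.ne', hcd.ne', hde.ne', hac.symm, had.symm, hbd.symm, hbe.symm, hce.symm]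

/-- Key lemma: for a `{C₃,C₅}`-free graph, the neighborhood of `w` is determined by
the square, the vertex `u`, and the neighborhood of `u`, whenever `uw` is an edge. -/
private lemma key_nbhd {H : SimpleGraph V} (h : C3C5Free H) {u w : V} (huw : H.Adj u w)
    (x : V) : H.Adj w x ↔ x = u ∨
      ((graphSq H).Adj u x ∧ (graphSq H).Adj w x ∧ x ≠ u ∧ ¬ H.Adj u x) := by
  constructor
  · intro hwx
    by_cases hxu : x = u
    · exact Or.inl hxu
    · refine Or.inr ⟨⟨Ne.symm hxu, Or.inr ⟨w, huw, hwx⟩⟩, ⟨hwx.ne, Or.inl hwx⟩, hxu, ?_⟩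
      intro hux
      exact no_c3 h huw hwx hux.symm
  · rintro (rfl | ⟨⟨hux, h1⟩, ⟨hwx, h2⟩, hxu, hnux⟩)
    · exact huw.symm
    · rcases h2 with h2 | ⟨c, hwc, hcx⟩
      · exact h2
      rcases h1 with h1 | ⟨c', huc', hc'x⟩
      · exact absurd h1 hnux
      by_cases hwc' : w = c'
      · exact hwc' ▸ hc'x
      exfalso
      have huc : u ≠ c := fun e => hnux (e ▸ hcx)
      have hcc' : c ≠ c' := fun e => no_c3 h huw (e ▸ hwc) huc'.symm
      exact no_c5 h huw hwc hcx hc'x.symm huc'.symm huc hux hwx hwc' hcc'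

theorem stmt9 (G : SimpleGraph V) (hconn : G.Connected)
    (v : V) (U : Set V) (hU : U ⊆ G.neighborSet v)
    (H₁ H₂ : SimpleGraph V) (h₁ : C3C5Free H₁) (h₂ : C3C5Free H₂)
    (hsq₁ : graphSq H₁ = G) (hsq₂ : graphSq H₂ = G)
    (hN₁ : H₁.neighborSet v = U) (hN₂ : H₂.neighborSet v = U) :
    H₁ = H₂ := by
  set P : V → Prop := fun a => H₁.neighborSet a = H₂.neighborSet a with hP
  have hPv : P v := hN₁.trans hN₂.symm
  have hstep : ∀ {u w : V}, P u → H₁.Adj u w → P w := by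
    intro u w hu huw₁
    have huw₂ : H₂.Adj u w := by
      have : w ∈ H₂.neighborSet u := hu ▸ (huw₁ : w ∈ H₁.neighborSet u)
      exact this
    ext x
    have e1 := key_nbhd h₁ huw₁ x
    have e2 := key_nbhd h₂ huw₂ x
    rw [hsq₁] at e1; rw [hsq₂] at e2
    have hux : H₁.Adj u x ↔ H₂.Adj u x := by
      constructor
      · intro hh; exact (hu ▸ (hh : x ∈ H₁.neighborSet u) : x ∈ H₂.neighborSet u)
      · intro hh; exact (hu ▸ (hh : x ∈ H₂.neighborSet u) : x ∈ H₁.neighborSet u)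
    show H₁.Adj w x ↔ H₂.Adj w x
    rw [e1, e2, hux]
  have hgstep : ∀ {u w : V}, P u → G.Adj u w → P w := by
    intro u w hu huw
    rw [← hsq₁] at huw
    rcases huw.2 with h | ⟨z, hz1, hz2⟩
    · exact hstep hu h
    · exact hstep (hstep hu hz1) hz2
  have hwalk : ∀ {s a : V}, G.Walk s a → P s → P a := by
    intro s a p
    induction p with
    | nil => exact id
    | cons h q ih => exact fun hs => ih (hgstep hs h)
  have hall : ∀ a, P a := fun a => hwalk (hconn v a).some hPv
  ext a b
  have := hall a
  constructor
  · intro hh; exact (this ▸ (hh : b ∈ H₁.neighborSet a) : b ∈ H₂.neighborSet a)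
  · intro hh; exact (this ▸ (hh : b ∈ H₂.neighborSet a) : b ∈ H₁.neighborSet a)
end
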